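/- Let (X,d,x) and (Y,d',y) be pointed metric spaces that are complete and doubling, and let f: X → ℝⁿ and g: Y → ℝⁿ be Lipschitz maps. Suppose that for every integer i ≥ 1 there exists a (1/i)-isometry φᵢ: X → Y from (X,x) to (Y,y) such that ‖f(a) − g(φᵢ(a))‖ < 1/i for every a ∈ B(x, i). Then there exists a surjective isometry ι: X → Y with ι(x) = y and g(ι(a)) = f(a) for all a ∈ X. -/

import Mathlib

open Metric Filter Topology

/-- A map `φ : X → Y` is an `ε`-isometry from `(X,x)` to `(Y,y)` if it distorts
distances between points of `B(x, 1/ε)` by less than `ε`, and for every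
`ε ≤ r ≤ 1/ε`, every point of `B(y, r-ε)` lies within distance `ε` of a point
of `φ(B(x,r))`. -/
def IsEpsIsometry {X Y : Type*} [MetricSpace X] [MetricSpace Y]
    (ε : ℝ) (x : X) (y : Y) (φ : X → Y) : Prop :=
  (∀ a ∈ ball x (1 / ε), ∀ b ∈ ball x (1 / ε), |dist (φ a) (φ b) - dist a b| < ε) ∧
  ∀ r : ℝ, ε ≤ r → r ≤ 1 / ε → ∀ z ∈ ball y (r - ε),
    ∃ a ∈ ball x r, dist z (φ a) < ε

/-- A metric space is doubling if there is `M` such that every ball of radius `2r`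
can be covered by at most `M` balls of radius `r`. -/
def DoublingSpace (X : Type*) [MetricSpace X] : Prop :=
  ∃ M : ℕ, ∀ (x : X) (r : ℝ), ∃ t : Finset X,
    t.card ≤ M ∧ ball x (2 * r) ⊆ ⋃ c ∈ t, ball c r

lemma doubling_cover {X : Type*} [MetricSpace X] (hX : DoublingSpace X) :
    ∀ (k : ℕ) (x : X) (r : ℝ), ∃ t : Finset X, ball x (2 ^ k * r) ⊆ ⋃ c ∈ t, ball c r := by
  intro k
  induction k with
  | zero =>
    intro x r
    refine ⟨{x}, ?_⟩
    simp
  | succ k ih =>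
    intro x r
    classical
    obtain ⟨M, hM⟩ := hX
    obtain ⟨s, -, hs⟩ := hM x (2 ^ k * r)
    choose t ht using fun c : X => ih c r
    refine ⟨s.biUnion t, ?_⟩
    intro z hz
    have hz' : z ∈ ball x (2 * (2 ^ k * r)) := by
      have : (2 : ℝ) ^ (k + 1) * r = 2 * (2 ^ k * r) := by ring
      rwa [this] at hz
    obtain ⟨c, hc, hzc⟩ := Set.mem_iUnion₂.1 (hs hz')
    obtain ⟨d, hd, hzd⟩ := Set.mem_iUnion₂.1 (ht c hzc)
    exact Set.mem_iUnion₂.2 ⟨d, Finset.mem_biUnion.2 ⟨c, hc, hd⟩, hzd⟩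

lemma properSpace_of_doubling {X : Type*} [MetricSpace X] [CompleteSpace X]
    (hX : DoublingSpace X) : ProperSpace X := by
  constructor
  intro x r
  refine TotallyBounded.isCompact_of_isClosed ?_ Metric.isClosed_closedBall
  refine totallyBounded_iff.2 fun ε hε => ?_
  obtain ⟨k, hk⟩ := pow_unbounded_of_one_lt ((|r| + 1) / ε) one_lt_two
  obtain ⟨t, ht⟩ := doubling_cover hX k x ε
  refine ⟨(t : Set X), t.finite_toSet, fun z hz => ht ?_⟩
  have h1 : |r| + 1 < 2 ^ k * ε := (div_lt_iff₀ hε).1 hk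
  have : dist z x ≤ r := mem_closedBall.1 hz
  exact mem_ball.2 (lt_of_le_of_lt (this.trans ((le_abs_self r).trans (by linarith))) h1)

lemma tendsto_of_eventually_dist_le {α Y : Type*} [PseudoMetricSpace Y] {l : Filter α}
    {u : α → Y} {z : Y} {v : α → ℝ} (h : ∀ᶠ i in l, dist (u i) z ≤ v i)
    (hv : Tendsto v l (𝓝 0)) : Tendsto u l (𝓝 z) := by
  rw [tendsto_iff_dist_tendsto_zero]
  exact squeeze_zero' (Eventually.of_forall fun _ => dist_nonneg) h hv


/-- If two complete doubling pointed space-functions are at distance zero, i.e. there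
are `(1/i)`-isometries compatible with the functions for every `i ≥ 1`, then there is
a surjective base-point preserving isometry intertwining the two functions. -/
theorem isometry_of_vanishing_distance
    {X Y : Type*} [MetricSpace X] [MetricSpace Y]
    [CompleteSpace X] [CompleteSpace Y]
    (hX : DoublingSpace X) (hY : DoublingSpace Y)
    (x : X) (y : Y) (n : ℕ)
    (f : X → EuclideanSpace ℝ (Fin n)) (g : Y → EuclideanSpace ℝ (Fin n))
    (hf : ∃ K : NNReal, LipschitzWith K f) (hg : ∃ K : NNReal, LipschitzWith K g)
    (h : ∀ i : ℕ, 1 ≤ i → ∃ φ : X → Y,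
      IsEpsIsometry (1 / (i : ℝ)) x y φ ∧
      ∀ a ∈ ball x (i : ℝ), ‖f a - g (φ a)‖ < 1 / (i : ℝ)) :
    ∃ ι : X → Y, Isometry ι ∧ Function.Surjective ι ∧ ι x = y ∧
      ∀ a : X, g (ι a) = f a := by
  classical
  have pX : ProperSpace X := properSpace_of_doubling hX
  have pY : ProperSpace Y := properSpace_of_doubling hY
  obtain ⟨Kg, hKg⟩ := hg
  choose φ0 hφ1 hφ2 using h
  set Φ : ℕ → X → Y := fun i => if hi : 1 ≤ i then φ0 i hi else fun _ => y with hΦdef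
  have hΦ1 : ∀ i : ℕ, 1 ≤ i →
      (∀ a ∈ ball x (i : ℝ), ∀ b ∈ ball x (i : ℝ),
        |dist (Φ i a) (Φ i b) - dist a b| < 1 / (i : ℝ)) := by
    intro i hi a ha b hb
    have h1 := (hφ1 i hi).1
    rw [one_div_one_div] at h1
    simp only [hΦdef, dif_pos hi]
    exact h1 a ha b hb
  have hΦsurj : ∀ i : ℕ, 1 ≤ i → ∀ r : ℝ, 1 / (i : ℝ) ≤ r → r ≤ (i : ℝ) →
      ∀ z ∈ ball y (r - 1 / (i : ℝ)), ∃ a ∈ ball x r, dist z (Φ i a) < 1 / (i : ℝ) := by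
    intro i hi r h1 h2 z hz
    have hs := (hφ1 i hi).2 r h1 (by rwa [one_div_one_div]) z hz
    simpa only [hΦdef, dif_pos hi] using hs
  have hΦf : ∀ i : ℕ, 1 ≤ i → ∀ a ∈ ball x (i : ℝ), ‖f a - g (Φ i a)‖ < 1 / (i : ℝ) := by
    intro i hi a ha
    simpa only [hΦdef, dif_pos hi] using hφ2 i hi a ha
  -- the ultrafilter
  set U : Ultrafilter ℕ := Ultrafilter.of atTop with hUdef
  have hU : (U : Filter ℕ) ≤ atTop := Ultrafilter.of_le _
  have hone : Tendsto (fun i : ℕ => 1 / (i : ℝ)) (U : Filter ℕ) (𝓝 0) :=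
    tendsto_one_div_atTop_nhds_zero_nat.mono_left hU
  -- basic eventual facts
  have hball : ∀ a : X, ∀ᶠ i : ℕ in atTop, 1 ≤ i ∧ a ∈ ball x (i : ℝ) := by
    intro a
    obtain ⟨N, hN⟩ := exists_nat_gt (dist a x)
    filter_upwards [eventually_ge_atTop (max 1 N)] with i hi
    refine ⟨le_trans (le_max_left _ _) hi, mem_ball.2 (hN.trans_le ?_)⟩
    exact_mod_cast le_trans (le_max_right 1 N) hi
  have E1 : ∀ a b : X, ∀ᶠ i : ℕ in atTop,
      |dist (Φ i a) (Φ i b) - dist a b| < 1 / (i : ℝ) := by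
    intro a b
    filter_upwards [hball a, hball b] with i hia hib
    exact hΦ1 i hia.1 a hia.2 b hib.2
  have E2 : ∀ᶠ i : ℕ in atTop, dist (Φ i x) y < 4 / (i : ℝ) := by
    filter_upwards [eventually_ge_atTop 2] with i hi2
    have hi1 : 1 ≤ i := le_trans one_le_two hi2
    have hipos : (0 : ℝ) < i := by exact_mod_cast hi1
    have hi2' : (2 : ℝ) ≤ i := by exact_mod_cast hi2
    have hr1 : 1 / (i : ℝ) ≤ 2 / (i : ℝ) := by gcongr; norm_num
    have hr2 : 2 / (i : ℝ) ≤ (i : ℝ) :=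
      le_trans (by rw [div_le_one hipos]; exact hi2') (by exact_mod_cast hi1)
    have hy : y ∈ ball y (2 / (i : ℝ) - 1 / (i : ℝ)) := by
      rw [mem_ball, dist_self]
      have : 2 / (i : ℝ) - 1 / (i : ℝ) = 1 / (i : ℝ) := by ring
      rw [this]
      positivity
    obtain ⟨a, ha, hya⟩ := hΦsurj i hi1 (2 / (i : ℝ)) hr1 hr2 y hy
    have hax : dist a x < 2 / (i : ℝ) := mem_ball.1 ha
    have haxi : a ∈ ball x (i : ℝ) :=
      mem_ball.2 (hax.trans_le (hr2.trans (le_refl _)))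
    have hxxi : x ∈ ball x (i : ℝ) := mem_ball_self hipos
    have hd := hΦ1 i hi1 a haxi x hxxi
    have hd' : dist (Φ i a) (Φ i x) < dist a x + 1 / (i : ℝ) := by
      have := abs_sub_lt_iff.1 hd
      linarith [this.1]
    calc dist (Φ i x) y ≤ dist (Φ i x) (Φ i a) + dist (Φ i a) y := dist_triangle _ _ _
      _ = dist (Φ i a) (Φ i x) + dist y (Φ i a) := by rw [dist_comm (Φ i x), dist_comm y]
      _ < (dist a x + 1 / (i : ℝ)) + 1 / (i : ℝ) := by linarith
      _ < (2 / (i : ℝ) + 1 / (i : ℝ)) + 1 / (i : ℝ) := by linarith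
      _ ≤ 4 / (i : ℝ) := by
          rw [← add_div, ← add_div]
          norm_num
  -- existence of ultrafilter limits
  have hexists : ∀ a : X, ∃ z : Y, Tendsto (fun i => Φ i a) (U : Filter ℕ) (𝓝 z) := by
    intro a
    have hbdd : ∀ᶠ i : ℕ in atTop, Φ i a ∈ closedBall y (dist a x + 5) := by
      filter_upwards [E1 a x, E2, hball a] with i h1 h2 h3
      have hi1 : 1 ≤ i := h3.1
      have hipos : (0 : ℝ) < i := by exact_mod_cast hi1
      have hle : 1 / (i : ℝ) ≤ 1 := by
        rw [div_le_one hipos]; exact_mod_cast hi1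
      have hile : (1 : ℝ) ≤ i := by exact_mod_cast hi1
      have h4 : 4 / (i : ℝ) ≤ 4 := by
        rw [div_le_iff₀ hipos]; nlinarith
      have h1' : dist (Φ i a) (Φ i x) < dist a x + 1 / (i : ℝ) := by
        have := abs_sub_lt_iff.1 h1
        linarith [this.1]
      rw [mem_closedBall]
      calc dist (Φ i a) y ≤ dist (Φ i a) (Φ i x) + dist (Φ i x) y := dist_triangle _ _ _
        _ ≤ (dist a x + 1 / (i : ℝ)) + 4 / (i : ℝ) := by linarith
        _ ≤ dist a x + 5 := by linarith
    have hmem : closedBall y (dist a x + 5) ∈ (U.map fun i => Φ i a) :=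
      Ultrafilter.mem_map.2 (hU hbdd)
    obtain ⟨z, -, hz⟩ := (isCompact_closedBall y (dist a x + 5)).ultrafilter_le_nhds
      (U.map fun i => Φ i a) (le_principal_iff.2 hmem)
    exact ⟨z, hz⟩
  choose ι hι using hexists
  -- distance preservation
  have hdist : ∀ a b : X, dist (ι a) (ι b) = dist a b := by
    intro a b
    have t1 : Tendsto (fun i => dist (Φ i a) (Φ i b)) (U : Filter ℕ)
        (𝓝 (dist (ι a) (ι b))) := (hι a).dist (hι b)
    have t2 : Tendsto (fun i => dist (Φ i a) (Φ i b)) (U : Filter ℕ) (𝓝 (dist a b)) := by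
      refine tendsto_of_eventually_dist_le ?_ hone
      filter_upwards [hU (E1 a b)] with i hi
      rw [Real.dist_eq]
      exact hi.le
    exact tendsto_nhds_unique t1 t2
  have hιx : ι x = y := by
    refine tendsto_nhds_unique (hι x) (tendsto_of_eventually_dist_le (v := fun i : ℕ => 4 / (i : ℝ)) ?_ ?_)
    · filter_upwards [hU E2] with i hi using hi.le
    · have : Tendsto (fun i : ℕ => 4 * (1 / (i : ℝ))) (U : Filter ℕ) (𝓝 (4 * 0)) :=
        hone.const_mul 4
      simpa [mul_one_div, div_eq_mul_inv] using this
  have hgf : ∀ a : X, g (ι a) = f a := by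
    intro a
    have t1 : Tendsto (fun i => g (Φ i a)) (U : Filter ℕ) (𝓝 (g (ι a))) :=
      (hKg.continuous.tendsto _).comp (hι a)
    have t2 : Tendsto (fun i => g (Φ i a)) (U : Filter ℕ) (𝓝 (f a)) := by
      refine tendsto_of_eventually_dist_le ?_ hone
      filter_upwards [hU (hball a)] with i hi
      have := hΦf i hi.1 a hi.2
      rw [dist_eq_norm, ← norm_neg]
      simpa [neg_sub] using this.le
    exact tendsto_nhds_unique t1 t2
  -- surjectivity
  have hsurj : Function.Surjective ι := by
    intro z
    set R : ℝ := dist z y + 1 with hRdef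
    have hR1 : (1 : ℝ) ≤ R := by
      have := dist_nonneg (x := z) (y := y); linarith
    have hA : ∀ i : ℕ, ∃ a : X,
        (2 ≤ i ∧ R ≤ (i : ℝ)) → a ∈ ball x R ∧ dist z (Φ i a) < 1 / (i : ℝ) := by
      intro i
      by_cases hc : 2 ≤ i ∧ R ≤ (i : ℝ)
      · obtain ⟨hi2, hiR⟩ := hc
        have hi1 : 1 ≤ i := le_trans one_le_two hi2
        have hipos : (0 : ℝ) < i := by exact_mod_cast hi1
        have hi2' : (2 : ℝ) ≤ i := by exact_mod_cast hi2
        have hr1 : 1 / (i : ℝ) ≤ R := by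
          refine le_trans ?_ hR1
          rw [div_le_one hipos]; exact_mod_cast hi1
        have hz' : z ∈ ball y (R - 1 / (i : ℝ)) := by
          rw [mem_ball]
          have : 1 / (i : ℝ) ≤ 1 / 2 := by
            apply one_div_le_one_div_of_le <;> linarith
          rw [hRdef]; linarith
        obtain ⟨a, ha, hza⟩ := hΦsurj i hi1 R hr1 hiR z hz'
        exact ⟨a, fun _ => ⟨ha, hza⟩⟩
      · exact ⟨x, fun hcon => absurd hcon hc⟩
    choose A hA using hA
    have hAev : ∀ᶠ i : ℕ in atTop, A i ∈ ball x R ∧ dist z (Φ i (A i)) < 1 / (i : ℝ) := by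
      obtain ⟨N, hN⟩ := exists_nat_gt R
      filter_upwards [eventually_ge_atTop (max 2 N)] with i hi
      refine hA i ⟨le_trans (le_max_left _ _) hi, ?_⟩
      have : (N : ℝ) ≤ i := by exact_mod_cast le_trans (le_max_right 2 N) hi
      linarith
    -- limit of A along U
    have hmem : closedBall x R ∈ U.map A := by
      refine Ultrafilter.mem_map.2 (hU ?_)
      filter_upwards [hAev] with i hi using ball_subset_closedBall hi.1
    obtain ⟨w, -, hw⟩ := (isCompact_closedBall x R).ultrafilter_le_nhds (U.map A)
      (le_principal_iff.2 hmem)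
    have hw' : Tendsto A (U : Filter ℕ) (𝓝 w) := hw
    refine ⟨w, ?_⟩
    -- Φ i (A i) tends to both z and ι w
    have tz : Tendsto (fun i => Φ i (A i)) (U : Filter ℕ) (𝓝 z) := by
      refine tendsto_of_eventually_dist_le ?_ hone
      filter_upwards [hU hAev] with i hi
      rw [dist_comm]; exact hi.2.le
    have tw : Tendsto (fun i => Φ i (A i)) (U : Filter ℕ) (𝓝 (ι w)) := by
      refine tendsto_of_eventually_dist_le
        (v := fun i => (dist (A i) w + 1 / (i : ℝ)) + dist (Φ i w) (ι w)) ?_ ?_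
      · have hballw := hball w
        obtain ⟨N, hN⟩ := exists_nat_gt R
        filter_upwards [hU hAev, hU hballw, hU (eventually_ge_atTop N)] with i hi hiw hiN
        have hRi : R ≤ (i : ℝ) := by
          have : (N : ℝ) ≤ i := by exact_mod_cast hiN
          linarith
        have hAi : A i ∈ ball x (i : ℝ) :=
          mem_ball.2 (lt_of_lt_of_le (mem_ball.1 hi.1) hRi)
        have hd := hΦ1 i hiw.1 (A i) hAi w hiw.2
        have hd' : dist (Φ i (A i)) (Φ i w) < dist (A i) w + 1 / (i : ℝ) := by
          have := abs_sub_lt_iff.1 hd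
          linarith [this.1]
        calc dist (Φ i (A i)) (ι w)
            ≤ dist (Φ i (A i)) (Φ i w) + dist (Φ i w) (ι w) := dist_triangle _ _ _
          _ ≤ (dist (A i) w + 1 / (i : ℝ)) + dist (Φ i w) (ι w) := by linarith
      · have l1 : Tendsto (fun i => dist (A i) w) (U : Filter ℕ) (𝓝 0) :=
          tendsto_iff_dist_tendsto_zero.1 hw'
        have l3 : Tendsto (fun i => dist (Φ i w) (ι w)) (U : Filter ℕ) (𝓝 0) :=
          tendsto_iff_dist_tendsto_zero.1 (hι w)
        simpa using (l1.add hone).add l3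
    exact tendsto_nhds_unique tw tz
  exact ⟨ι, Isometry.of_dist_eq hdist, hsurj, hιx, hgf⟩
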